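/- Let a₁, a₂ ∈ ℝ[[X₁,…,Xₙ]] be formal power series such that a₁² + a₂² equals a monomial X^β times a unit. Then the ideal (a₁, a₂) in ℝ[[X]] is generated by a monomial: there exists γ ∈ ℕⁿ with 2γ = β and power series ã₁, ã₂ with a_i = X^γ·ã_i and ã₁(0)² + ã₂(0)² ≠ 0. -/

import Mathlib

open MvPowerSeries Finsupp

namespace Stmt14Aux

variable {n : ℕ}

/-- The "set `X i := 0`" operation on power series, as a function. -/
noncomputable def setZeroFun (i : Fin n) (a : MvPowerSeries (Fin n) ℝ) :
    MvPowerSeries (Fin n) ℝ :=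
  fun e => if e i = 0 then a e else 0

lemma coeff_setZeroFun (i : Fin n) (a : MvPowerSeries (Fin n) ℝ) (e : Fin n →₀ ℕ) :
    MvPowerSeries.coeff (R := ℝ) e (setZeroFun i a)
      = if e i = 0 then MvPowerSeries.coeff (R := ℝ) e a else 0 := rfl

lemma setZeroFun_mul (i : Fin n) (a b : MvPowerSeries (Fin n) ℝ) :
    setZeroFun i (a * b) = setZeroFun i a * setZeroFun i b := by
  ext e
  rw [coeff_setZeroFun, MvPowerSeries.coeff_mul, MvPowerSeries.coeff_mul]
  by_cases he : e i = 0
  · rw [if_pos he]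
    apply Finset.sum_congr rfl
    rintro ⟨p, q⟩ hpq
    rw [Finset.HasAntidiagonal.mem_antidiagonal] at hpq
    dsimp only at hpq ⊢
    have hpi : p i + q i = 0 := by rw [← Finsupp.add_apply, hpq, he]
    have hp : p i = 0 := by omega
    have hq : q i = 0 := by omega
    rw [coeff_setZeroFun, coeff_setZeroFun, if_pos hp, if_pos hq]
  · rw [if_neg he]
    symm
    apply Finset.sum_eq_zero
    rintro ⟨p, q⟩ hpq
    rw [Finset.HasAntidiagonal.mem_antidiagonal] at hpq
    dsimp only at hpq ⊢
    rw [coeff_setZeroFun, coeff_setZeroFun]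
    by_cases hq : q i = 0
    · have hp : ¬ p i = 0 := by
        intro hp
        exact he (by rw [← hpq, Finsupp.add_apply, hp, hq])
      rw [if_neg hp, zero_mul]
    · rw [if_neg hq, mul_zero]

/-- The "set `X i := 0`" ring homomorphism. -/
noncomputable def setZero (i : Fin n) :
    MvPowerSeries (Fin n) ℝ →+* MvPowerSeries (Fin n) ℝ where
  toFun := setZeroFun i
  map_one' := by
    ext e
    rw [coeff_setZeroFun]
    by_cases he : e i = 0
    · rw [if_pos he]
    · rw [if_neg he, MvPowerSeries.coeff_one, if_neg]
      rintro rfl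
      exact he rfl
  map_mul' := setZeroFun_mul i
  map_zero' := by
    ext e
    rw [coeff_setZeroFun]
    simp
  map_add' a b := by
    ext e
    rw [coeff_setZeroFun, map_add, map_add, coeff_setZeroFun, coeff_setZeroFun]
    split <;> simp

lemma coeff_setZero (i : Fin n) (a : MvPowerSeries (Fin n) ℝ) (e : Fin n →₀ ℕ) :
    MvPowerSeries.coeff (R := ℝ) e (setZero i a)
      = if e i = 0 then MvPowerSeries.coeff (R := ℝ) e a else 0 := rfl

lemma constantCoeff_setZero (i : Fin n) (a : MvPowerSeries (Fin n) ℝ) :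
    MvPowerSeries.constantCoeff (σ := Fin n) (R := ℝ) (setZero i a)
      = MvPowerSeries.constantCoeff (σ := Fin n) (R := ℝ) a := by
  rw [← MvPowerSeries.coeff_zero_eq_constantCoeff_apply,
    ← MvPowerSeries.coeff_zero_eq_constantCoeff_apply, coeff_setZero,
    if_pos (show (0 : Fin n →₀ ℕ) i = 0 from rfl)]

lemma setZero_monomial_eq_zero {i : Fin n} {d : Fin n →₀ ℕ} (hd : d i ≠ 0) (r : ℝ) :
    setZero i (MvPowerSeries.monomial (R := ℝ) d r) = 0 := by
  ext e
  rw [coeff_setZero, map_zero]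
  by_cases he : e i = 0
  · rw [if_pos he, MvPowerSeries.coeff_monomial, if_neg]
    rintro rfl
    exact hd he
  · rw [if_neg he]

lemma setZero_monomial_eq_self {i : Fin n} {d : Fin n →₀ ℕ} (hd : d i = 0) (r : ℝ) :
    setZero i (MvPowerSeries.monomial (R := ℝ) d r) = MvPowerSeries.monomial (R := ℝ) d r := by
  ext e
  rw [coeff_setZero]
  by_cases he : e i = 0
  · rw [if_pos he]
  · rw [if_neg he, MvPowerSeries.coeff_monomial, if_neg]
    rintro rfl
    exact he hd

lemma dvd_of_setZero_eq_zero {i : Fin n} {a : MvPowerSeries (Fin n) ℝ}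
    (h : setZero i a = 0) :
    ∃ b, a = MvPowerSeries.monomial (R := ℝ) (Finsupp.single i 1) 1 * b := by
  refine ⟨id (fun e => MvPowerSeries.coeff (R := ℝ) (e + Finsupp.single i 1) a : MvPowerSeries (Fin n) ℝ), ?_⟩
  ext e
  rw [MvPowerSeries.coeff_monomial_mul]
  by_cases hle : Finsupp.single i 1 ≤ e
  · rw [if_pos hle, one_mul, MvPowerSeries.coeff_apply]
    show MvPowerSeries.coeff (R := ℝ) e a = MvPowerSeries.coeff (R := ℝ) (e - Finsupp.single i 1 + Finsupp.single i 1) a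
    rw [tsub_add_cancel_of_le hle]
  · rw [if_neg hle]
    have he : e i = 0 := by
      by_contra h'
      exact hle (Finsupp.single_le_iff.mpr (Nat.one_le_iff_ne_zero.mpr h'))
    have := congrArg (MvPowerSeries.coeff (R := ℝ) e) h
    rw [coeff_setZero, if_pos he, map_zero] at this
    exact this

section Lex

lemma coeff_sq_of_le {f : MvPowerSeries (Fin n) ℝ} {d : Fin n →₀ ℕ}
    (hd : WithTop.some (toLex d) ≤ lexOrder f) :
    MvPowerSeries.coeff (R := ℝ) (d + d) (f * f)
      = MvPowerSeries.coeff (R := ℝ) d f * MvPowerSeries.coeff (R := ℝ) d f := by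
  rw [MvPowerSeries.coeff_mul]
  apply Finset.sum_eq_single_of_mem (⟨d, d⟩ : (Fin n →₀ ℕ) × (Fin n →₀ ℕ))
    (Finset.HasAntidiagonal.mem_antidiagonal.mpr rfl)
  rintro ⟨u, v⟩ huv hne
  rw [Finset.HasAntidiagonal.mem_antidiagonal] at huv
  dsimp only at huv ⊢
  by_cases hud : u = d
  · have hvd : v = d := by
      rw [hud] at huv
      exact add_left_cancel huv
    exact absurd (by rw [hud, hvd]) hne
  by_cases hu : toLex u < toLex d
  · rw [MvPowerSeries.coeff_eq_zero_of_lt_lexOrder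
      (lt_of_lt_of_le (WithTop.coe_lt_coe.mpr hu) hd), zero_mul]
  · push_neg at hu
    have hu' : toLex d < toLex u :=
      lt_of_le_of_ne hu (fun hh => hud (toLex.injective hh.symm))
    have hv : toLex v < toLex d := by
      by_contra hv'
      push_neg at hv'
      have h2 : toLex d + toLex d < toLex u + toLex v := add_lt_add_of_lt_of_le hu' hv'
      rw [← toLex_add, ← toLex_add, huv] at h2
      exact lt_irrefl _ h2
    rw [MvPowerSeries.coeff_eq_zero_of_lt_lexOrder
      (lt_of_lt_of_le (WithTop.coe_lt_coe.mpr hv) hd), mul_zero]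

lemma sq_add_sq_ne_zero {f g : MvPowerSeries (Fin n) ℝ} (hf : f ≠ 0)
    (hfg : lexOrder f ≤ lexOrder g) : f ^ 2 + g ^ 2 ≠ 0 := by
  obtain ⟨d, hd⟩ := MvPowerSeries.exists_finsupp_eq_lexOrder_of_ne_zero hf
  intro h0
  have hc : MvPowerSeries.coeff (R := ℝ) (d + d) (f ^ 2 + g ^ 2)
      = MvPowerSeries.coeff (R := ℝ) d f * MvPowerSeries.coeff (R := ℝ) d f
        + MvPowerSeries.coeff (R := ℝ) d g * MvPowerSeries.coeff (R := ℝ) d g := by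
    rw [map_add, pow_two, pow_two, coeff_sq_of_le (le_of_eq hd.symm),
      coeff_sq_of_le (le_trans (le_of_eq hd.symm) hfg)]
  have h1 : MvPowerSeries.coeff (R := ℝ) d f ≠ 0 :=
    MvPowerSeries.coeff_ne_zero_of_lexOrder hd.symm
  rw [h0, map_zero] at hc
  nlinarith [mul_self_pos.mpr h1, mul_self_nonneg (MvPowerSeries.coeff (R := ℝ) d g)]

lemma formallyReal {f g : MvPowerSeries (Fin n) ℝ} (h : f ^ 2 + g ^ 2 = 0) :
    f = 0 ∧ g = 0 := by
  by_cases hf : f = 0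
  · subst hf
    rw [zero_pow two_ne_zero, zero_add] at h
    exact ⟨rfl, pow_eq_zero_iff two_ne_zero |>.mp h⟩
  by_cases hg : g = 0
  · subst hg
    rw [zero_pow two_ne_zero, add_zero] at h
    exact ⟨pow_eq_zero_iff two_ne_zero |>.mp h, rfl⟩
  rcases le_total (lexOrder f) (lexOrder g) with hle | hle
  · exact absurd h (sq_add_sq_ne_zero hf hle)
  · rw [add_comm] at h
    exact absurd h (sq_add_sq_ne_zero hg hle)

end Lex

lemma monomial_ne_zero (d : Fin n →₀ ℕ) :
    MvPowerSeries.monomial (R := ℝ) d (1 : ℝ) ≠ 0 := by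
  intro h
  have := congrArg (MvPowerSeries.coeff (R := ℝ) d) h
  rw [MvPowerSeries.coeff_monomial_same, map_zero] at this
  exact one_ne_zero this

lemma key : ∀ (k : ℕ) (β : Fin n →₀ ℕ), (∑ j, β j) ≤ k →
    ∀ a₁ a₂ g : MvPowerSeries (Fin n) ℝ,
      MvPowerSeries.constantCoeff (σ := Fin n) (R := ℝ) g ≠ 0 →
      a₁ ^ 2 + a₂ ^ 2 = MvPowerSeries.monomial (R := ℝ) β 1 * g →
      ∃ (γ : Fin n →₀ ℕ) (b₁ b₂ : MvPowerSeries (Fin n) ℝ),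
        γ + γ = β ∧
        a₁ = MvPowerSeries.monomial (R := ℝ) γ 1 * b₁ ∧
        a₂ = MvPowerSeries.monomial (R := ℝ) γ 1 * b₂ := by
  intro k
  induction k with
  | zero =>
    intro β hβ a₁ a₂ g hg h
    have hβ0 : β = 0 := by
      ext j
      have h1 : β j ≤ ∑ j, β j :=
        Finset.single_le_sum (fun j _ => Nat.zero_le (β j)) (Finset.mem_univ j)
      simp only [Finsupp.coe_zero, Pi.zero_apply]
      omega
    subst hβ0
    exact ⟨0, a₁, a₂, by simp, by rw [MvPowerSeries.monomial_zero_one, one_mul],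
      by rw [MvPowerSeries.monomial_zero_one, one_mul]⟩
  | succ k ih =>
    intro β hβ a₁ a₂ g hg h
    by_cases hβ0 : β = 0
    · subst hβ0
      exact ⟨0, a₁, a₂, by simp, by rw [MvPowerSeries.monomial_zero_one, one_mul],
        by rw [MvPowerSeries.monomial_zero_one, one_mul]⟩
    -- pick a variable occurring in β
    obtain ⟨i, hi⟩ : ∃ i, β i ≠ 0 := by
      by_contra h'
      push_neg at h'
      exact hβ0 (Finsupp.ext fun a => by simp [h' a])
    -- both a₁, a₂ are divisible by X i
    have hz : setZero i a₁ ^ 2 + setZero i a₂ ^ 2 = 0 := by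
      rw [← map_pow, ← map_pow, ← map_add, h, map_mul,
        setZero_monomial_eq_zero hi, zero_mul]
    obtain ⟨hz1, hz2⟩ := formallyReal hz
    obtain ⟨a₁', ha₁⟩ := dvd_of_setZero_eq_zero hz1
    obtain ⟨a₂', ha₂⟩ := dvd_of_setZero_eq_zero hz2
    set Xi : MvPowerSeries (Fin n) ℝ := MvPowerSeries.monomial (R := ℝ) (Finsupp.single i 1) 1 with hXi
    have hXi0 : Xi ≠ 0 := monomial_ne_zero _
    set S : MvPowerSeries (Fin n) ℝ := a₁' ^ 2 + a₂' ^ 2 with hS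
    have hmain : Xi * (Xi * S) = MvPowerSeries.monomial (R := ℝ) β 1 * g := by
      rw [← h, ha₁, ha₂]; ring
    -- β i ≥ 2
    have hβi2 : 2 ≤ β i := by
      rcases Nat.lt_or_ge (β i) 2 with hlt | hge
      · exfalso
        have hβi1 : β i = 1 := by omega
        set β₁ := β - Finsupp.single i 1 with hβ₁
        have hsum : Finsupp.single i 1 + β₁ = β := by
          rw [add_comm, hβ₁, tsub_add_cancel_of_le (Finsupp.single_le_iff.mpr (by omega))]
        have hmon : MvPowerSeries.monomial (R := ℝ) β (1 : ℝ)
            = Xi * MvPowerSeries.monomial (R := ℝ) β₁ 1 := by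
          rw [hXi, MvPowerSeries.monomial_mul_monomial, one_mul, hsum]
        rw [hmon, mul_assoc] at hmain
        have hcan : Xi * S = MvPowerSeries.monomial (R := ℝ) β₁ 1 * g :=
          mul_left_cancel₀ hXi0 hmain
        have happ := congrArg (setZero i) hcan
        rw [map_mul, map_mul, setZero_monomial_eq_zero (by simp) 1, zero_mul,
          setZero_monomial_eq_self (d := β₁) (by
            simp only [hβ₁, Finsupp.tsub_apply, Finsupp.single_eq_same, hβi1]) 1] at happ
        have hgz : setZero i g = 0 :=
          (mul_eq_zero.mp happ.symm).resolve_left (monomial_ne_zero β₁)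
        apply hg
        rw [← constantCoeff_setZero i g, hgz, map_zero]
      · exact hge
    set β' := β - Finsupp.single i 2 with hβ'
    have hsum2 : Finsupp.single i 2 + β' = β := by
      rw [add_comm, hβ', tsub_add_cancel_of_le (Finsupp.single_le_iff.mpr hβi2)]
    have hmon2 : MvPowerSeries.monomial (R := ℝ) β (1 : ℝ)
        = Xi * Xi * MvPowerSeries.monomial (R := ℝ) β' 1 := by
      rw [hXi, MvPowerSeries.monomial_mul_monomial, MvPowerSeries.monomial_mul_monomial,
        one_mul, one_mul, ← Finsupp.single_add, hsum2]
    rw [hmon2] at hmain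
    have hcan2 : S = MvPowerSeries.monomial (R := ℝ) β' 1 * g := by
      apply mul_left_cancel₀ (mul_ne_zero hXi0 hXi0)
      rw [← mul_assoc] at hmain
      rw [hmain, mul_assoc]
    have hβ'sum : (∑ j, β' j) ≤ k := by
      have hlt : (∑ j, β' j) < ∑ j, β j := by
        have hle : ∀ j ∈ Finset.univ, β' j ≤ β j := fun j _ => by
          simp only [hβ', Finsupp.tsub_apply]
          exact Nat.sub_le _ _
        have hlt' : β' i < β i := by
          simp only [hβ', Finsupp.tsub_apply, Finsupp.single_eq_same]
          omega
        exact Finset.sum_lt_sum hle ⟨i, Finset.mem_univ i, hlt'⟩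
      omega
    obtain ⟨γ', b₁, b₂, hγ', hb₁, hb₂⟩ := ih β' hβ'sum a₁' a₂' g hg hcan2
    refine ⟨Finsupp.single i 1 + γ', b₁, b₂, ?_, ?_, ?_⟩
    · rw [add_add_add_comm, ← Finsupp.single_add, hγ', hsum2]
    · rw [ha₁, hb₁, ← mul_assoc, hXi, MvPowerSeries.monomial_mul_monomial, one_mul]
    · rw [ha₂, hb₂, ← mul_assoc, hXi, MvPowerSeries.monomial_mul_monomial, one_mul]

end Stmt14Aux

open Stmt14Aux in
theorem stmt14 (n : ℕ) (a₁ a₂ : MvPowerSeries (Fin n) ℝ) (β : Fin n →₀ ℕ)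
    (g : MvPowerSeries (Fin n) ℝ)
    (hg : MvPowerSeries.constantCoeff (σ := Fin n) (R := ℝ) g ≠ 0)
    (h : a₁ ^ 2 + a₂ ^ 2 = MvPowerSeries.monomial (σ := Fin n) (R := ℝ) β (1 : ℝ) * g) :
    ∃ (γ : Fin n →₀ ℕ) (b₁ b₂ : MvPowerSeries (Fin n) ℝ),
      γ + γ = β ∧
      a₁ = MvPowerSeries.monomial (σ := Fin n) (R := ℝ) γ (1 : ℝ) * b₁ ∧
      a₂ = MvPowerSeries.monomial (σ := Fin n) (R := ℝ) γ (1 : ℝ) * b₂ ∧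
      (MvPowerSeries.constantCoeff (σ := Fin n) (R := ℝ) b₁) ^ 2
        + (MvPowerSeries.constantCoeff (σ := Fin n) (R := ℝ) b₂) ^ 2 ≠ 0 ∧
      Ideal.span {a₁, a₂} = Ideal.span {MvPowerSeries.monomial (σ := Fin n) (R := ℝ) γ (1 : ℝ)} := by
  obtain ⟨γ, b₁, b₂, hγ, h₁, h₂⟩ := key (∑ j, β j) β le_rfl a₁ a₂ g hg h
  set m : MvPowerSeries (Fin n) ℝ := MvPowerSeries.monomial (R := ℝ) γ 1 with hm
  have hm0 : m ≠ 0 := monomial_ne_zero γ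
  have hmm : m * m = MvPowerSeries.monomial (R := ℝ) β 1 := by
    rw [hm, MvPowerSeries.monomial_mul_monomial, one_mul, hγ]
  have hbg : b₁ ^ 2 + b₂ ^ 2 = g := by
    apply mul_left_cancel₀ (mul_ne_zero hm0 hm0)
    calc m * m * (b₁ ^ 2 + b₂ ^ 2) = (m * b₁) ^ 2 + (m * b₂) ^ 2 := by ring
      _ = a₁ ^ 2 + a₂ ^ 2 := by rw [h₁, h₂]
      _ = MvPowerSeries.monomial (R := ℝ) β 1 * g := h
      _ = m * m * g := by rw [hmm]
  have hcc : (MvPowerSeries.constantCoeff (σ := Fin n) (R := ℝ) b₁) ^ 2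
      + (MvPowerSeries.constantCoeff (σ := Fin n) (R := ℝ) b₂) ^ 2 ≠ 0 := by
    rw [← map_pow, ← map_pow, ← map_add, hbg]
    exact hg
  refine ⟨γ, b₁, b₂, hγ, h₁, h₂, hcc, ?_⟩
  apply le_antisymm
  · rw [Ideal.span_le]
    rintro x (rfl | rfl)
    · exact Ideal.mem_span_singleton.mpr ⟨b₁, h₁⟩
    · exact Ideal.mem_span_singleton.mpr ⟨b₂, h₂⟩
  · rw [Ideal.span_le, Set.singleton_subset_iff]
    have hu : IsUnit g :=
      MvPowerSeries.isUnit_iff_constantCoeff.mpr (isUnit_iff_ne_zero.mpr hg)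
    obtain ⟨u, hu⟩ := hu
    refine Ideal.mem_span_pair.mpr ⟨b₁ * ↑u⁻¹, b₂ * ↑u⁻¹, ?_⟩
    rw [h₁, h₂]
    calc b₁ * ↑u⁻¹ * (m * b₁) + b₂ * ↑u⁻¹ * (m * b₂)
        = m * ((b₁ ^ 2 + b₂ ^ 2) * ↑u⁻¹) := by ring
      _ = m := by rw [hbg, ← hu, Units.mul_inv, mul_one]
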